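/- Let P and Q be two probability measures on the same measurable space. For every measurable set A with complement Aᶜ, P(A) + Q(Aᶜ) ≥ (1/2) · exp(−KL(P ‖ Q)). -/

import Mathlib

open MeasureTheory Classical
open scoped ENNReal NNReal

/-- KL divergence with values in `EReal`: `∫ log(dP/dQ) dP` when `P ≪ Q` and the
integrand is integrable, and `+∞` otherwise. -/
noncomputable def klDivE {Ω : Type*} [MeasurableSpace Ω] (P Q : Measure Ω) : EReal :=
  if P ≪ Q ∧ Integrable (fun x => Real.log (P.rnDeriv Q x).toReal) P then
    ((∫ x, Real.log (P.rnDeriv Q x).toReal ∂P : ℝ) : EReal)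
  else ⊤

/-- `exp(−x)` for `x : EReal`, with `exp(−∞) = 0` (and junk value `0` at `x = ⊥`). -/
noncomputable def expNeg (x : EReal) : ℝ :=
  if x = ⊤ ∨ x = ⊥ then 0 else Real.exp (-x.toReal)

/-- Bretagnolle–Huber inequality: for probability measures `P, Q` and any measurable
set `A`, `P(A) + Q(Aᶜ) ≥ (1/2) · exp(−KL(P‖Q))`. -/
theorem stmt7 {Ω : Type*} [MeasurableSpace Ω] (P Q : Measure Ω)
    [IsProbabilityMeasure P] [IsProbabilityMeasure Q]
    (A : Set Ω) (hA : MeasurableSet A) :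
    (1 / 2 : ℝ) * expNeg (klDivE P Q) ≤ (P A).toReal + (Q Aᶜ).toReal := by
  by_cases hc : P ≪ Q ∧ Integrable (fun x => Real.log (P.rnDeriv Q x).toReal) P
  · obtain ⟨hPQ, hint⟩ := hc
    set f : Ω → ℝ≥0∞ := P.rnDeriv Q with hf
    have hfm : Measurable f := P.measurable_rnDeriv Q
    set KL : ℝ := ∫ x, Real.log (f x).toReal ∂P with hKL
    have hklE : klDivE P Q = ((KL : ℝ) : EReal) := by
      rw [klDivE, if_pos ⟨hPQ, hint⟩]
    have hexp : expNeg (klDivE P Q) = Real.exp (-KL) := by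
      rw [hklE, expNeg]
      rw [if_neg (by simp [EReal.coe_ne_top, EReal.coe_ne_bot] : ¬(((KL:ℝ):EReal) = ⊤ ∨ ((KL:ℝ):EReal) = ⊥))]
      simp
    rw [hexp]
    -- key quantities
    have hflt : ∀ᵐ x ∂Q, f x < ∞ := Measure.rnDeriv_lt_top P Q
    have hfltP : ∀ᵐ x ∂P, f x < ∞ := hPQ.ae_le hflt
    have hfpos : ∀ᵐ x ∂P, 0 < f x := Measure.rnDeriv_pos hPQ
    have hint1 : ∫⁻ x, f x ∂Q = 1 := by
      rw [Measure.lintegral_rnDeriv hPQ]; simp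
    set m1 : ℝ≥0∞ := ∫⁻ x, min (f x) 1 ∂Q with hm1
    set H : ℝ≥0∞ := ∫⁻ x, (f x) ^ (1/2 : ℝ) ∂Q with hH
    have hm1le : m1 ≤ 1 := by
      calc m1 ≤ ∫⁻ _, 1 ∂Q := lintegral_mono fun x => min_le_right _ _
      _ = 1 := by simp
    -- Step A+B: H^2 ≤ 2 * m1
    set M : ℝ≥0∞ := ∫⁻ x, max (f x) 1 ∂Q with hM
    have hmM : m1 + M = 2 := by
      rw [hm1, hM, ← lintegral_add_left (hfm.min measurable_const)]
      have : ∀ x, min (f x) 1 + max (f x) 1 = f x + 1 := fun x => min_add_max _ _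
      simp_rw [this]
      rw [lintegral_add_right _ measurable_const, hint1]
      simp [one_add_one_eq_two]
    have hMle : M ≤ 2 := le_trans le_add_self (le_of_eq hmM)
    have hCS : H ≤ m1 ^ (1/2 : ℝ) * M ^ (1/2 : ℝ) := by
      have hconj : Real.HolderConjugate 2 2 := Real.HolderConjugate.two_two
      have := ENNReal.lintegral_mul_le_Lp_mul_Lq Q hconj
        (f := fun x => (min (f x) 1) ^ (1/2 : ℝ)) (g := fun x => (max (f x) 1) ^ (1/2 : ℝ))
        ((hfm.min measurable_const).pow_const _).aemeasurable
        ((hfm.max measurable_const).pow_const _).aemeasurable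
      have heq : ∀ x, (min (f x) 1) ^ (1/2 : ℝ) * (max (f x) 1) ^ (1/2 : ℝ) = (f x) ^ (1/2 : ℝ) := by
        intro x
        rw [← ENNReal.mul_rpow_of_nonneg _ _ (by norm_num), min_mul_max, mul_one]
      simp only [Pi.mul_apply, heq] at this
      have hpow : ∀ (a : ℝ≥0∞), (a ^ (1/2:ℝ)) ^ (2:ℝ) = a := by
        intro a
        rw [← ENNReal.rpow_mul]
        norm_num
      calc H ≤ (∫⁻ x, ((min (f x) 1) ^ (1/2:ℝ)) ^ (2:ℝ) ∂Q) ^ (1/(2:ℝ)) *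
            (∫⁻ x, ((max (f x) 1) ^ (1/2:ℝ)) ^ (2:ℝ) ∂Q) ^ (1/(2:ℝ)) := this
        _ = m1 ^ (1/2 : ℝ) * M ^ (1/2 : ℝ) := by simp_rw [hpow]; rfl
    have hAB : H ^ 2 ≤ 2 * m1 := by
      calc H ^ 2 ≤ (m1 ^ (1/2 : ℝ) * M ^ (1/2 : ℝ)) ^ 2 := pow_le_pow_left' hCS 2
        _ = m1 * M := by
            rw [mul_pow, ← ENNReal.rpow_natCast (m1 ^ (1/2:ℝ)) 2,
              ← ENNReal.rpow_natCast (M ^ (1/2:ℝ)) 2, ← ENNReal.rpow_mul, ← ENNReal.rpow_mul]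
            norm_num
        _ ≤ m1 * 2 := mul_le_mul_right hMle _
        _ = 2 * m1 := mul_comm _ _
    have hHlt : H < ∞ := by
      have : H ≤ 2 := by
        calc H ≤ ∫⁻ x, (f x + 1) ∂Q := by
              refine lintegral_mono fun x => ?_
              rcases le_total (f x) 1 with h | h
              · calc (f x) ^ (1/2:ℝ) ≤ (1:ℝ≥0∞) ^ (1/2:ℝ) :=
                    ENNReal.rpow_le_rpow h (by norm_num)
                  _ = 1 := ENNReal.one_rpow _
                  _ ≤ f x + 1 := le_add_self
              · calc (f x) ^ (1/2:ℝ) ≤ (f x) ^ (1:ℝ) :=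
                    ENNReal.rpow_le_rpow_of_exponent_le (by simpa using h) (by norm_num)
                  _ = f x := ENNReal.rpow_one _
                  _ ≤ f x + 1 := le_self_add
          _ = 2 := by
              rw [lintegral_add_right _ measurable_const, hint1]; simp [one_add_one_eq_two]
      exact lt_of_le_of_lt this (by norm_num)
    -- Step C: m1 ≤ P A + Q Aᶜ
    have hC : m1 ≤ P A + Q Aᶜ := by
      have hsplit : m1 = (∫⁻ x in A, min (f x) 1 ∂Q) + ∫⁻ x in Aᶜ, min (f x) 1 ∂Q := by
        rw [hm1, ← lintegral_add_compl _ hA]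
      rw [hsplit]
      gcongr
      · calc (∫⁻ x in A, min (f x) 1 ∂Q) ≤ ∫⁻ x in A, f x ∂Q :=
            lintegral_mono fun x => min_le_left _ _
          _ = P A := Measure.setLIntegral_rnDeriv hPQ A
      · calc (∫⁻ x in Aᶜ, min (f x) 1 ∂Q) ≤ ∫⁻ _ in Aᶜ, 1 ∂Q :=
            lintegral_mono fun x => min_le_right _ _
          _ = Q Aᶜ := by simp
    -- Step D: exp (-KL) ≤ H.toReal ^ 2
    have hD : Real.exp (-KL) ≤ H.toReal ^ 2 := by
      set g : Ω → ℝ≥0∞ := fun x => (f x) ^ (-(1/2) : ℝ) with hg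
      have hgm : Measurable g := hfm.pow_const _
      have hchange : ∫⁻ x, g x ∂P = H := by
        rw [← lintegral_rnDeriv_mul hPQ hgm.aemeasurable]
        refine lintegral_congr_ae ?_
        filter_upwards [hflt] with x hx
        show f x * (f x) ^ (-(1/2) : ℝ) = (f x) ^ (1/2 : ℝ)
        rcases eq_or_ne (f x) 0 with h0 | h0
        · rw [h0, ENNReal.zero_rpow_of_neg (by norm_num), ENNReal.zero_rpow_of_pos (by norm_num),
            zero_mul]
        · nth_rewrite 1 [← ENNReal.rpow_one (f x)]
          rw [← ENNReal.rpow_add _ _ h0 hx.ne]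
          norm_num
      have hgltP : ∀ᵐ x ∂P, g x < ∞ := by
        filter_upwards [hfpos, hfltP] with x hx hxt
        show (f x) ^ (-(1/2) : ℝ) < ∞
        rw [ENNReal.rpow_neg, ENNReal.inv_lt_top]
        exact ENNReal.rpow_pos hx hxt.ne
      have hgint : Integrable (fun x => (g x).toReal) P :=
        integrable_toReal_of_lintegral_ne_top hgm.aemeasurable (by rw [hchange]; exact hHlt.ne)
      set m : ℝ := ∫ x, (g x).toReal ∂P with hm
      have hmH : m = H.toReal := by
        rw [hm, integral_toReal hgm.aemeasurable hgltP, hchange]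
      have hgR : ∀ᵐ x ∂P, (g x).toReal = (f x).toReal ^ (-(1/2) : ℝ) := by
        filter_upwards with x
        rw [hg]
        exact (ENNReal.toReal_rpow _ _).symm
      have hgRpos : ∀ᵐ x ∂P, 0 < (g x).toReal := by
        filter_upwards [hgR, hfpos, hfltP] with x h1 h2 h3
        rw [h1]
        exact Real.rpow_pos_of_pos (ENNReal.toReal_pos h2.ne' h3.ne) _
      have hmpos : 0 < m := by
        rw [hm, integral_pos_iff_support_of_nonneg (fun x => ENNReal.toReal_nonneg) hgint]
        have hae : ∀ᵐ x ∂P, x ∈ Function.support fun y => (g y).toReal := by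
          filter_upwards [hgRpos] with x hx
          exact hx.ne'
        have hcompl : P (Function.support fun y => (g y).toReal)ᶜ = 0 := by
          exact mem_ae_iff.mp hae
        have h1le : (1 : ℝ≥0∞) ≤ P (Function.support fun y => (g y).toReal) := by
          calc (1 : ℝ≥0∞) = P Set.univ := measure_univ.symm
            _ = P ((Function.support fun y => (g y).toReal) ∪
                (Function.support fun y => (g y).toReal)ᶜ) := by rw [Set.union_compl_self]
            _ ≤ P (Function.support fun y => (g y).toReal) +
                P (Function.support fun y => (g y).toReal)ᶜ := measure_union_le _ _
            _ = P (Function.support fun y => (g y).toReal) := by rw [hcompl, add_zero]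
        exact lt_of_lt_of_le zero_lt_one h1le
      have hlog : ∀ᵐ x ∂P, Real.log ((g x).toReal) = (-(1/2 : ℝ)) * Real.log (f x).toReal := by
        filter_upwards [hgR, hfpos, hfltP] with x h1 h2 h3
        rw [h1, Real.log_rpow (ENNReal.toReal_pos h2.ne' h3.ne)]
      have hloggint : Integrable (fun x => Real.log ((g x).toReal)) P :=
        (hint.const_mul (-(1/2 : ℝ))).congr (by filter_upwards [hlog] with x hx; exact hx.symm)
      have hkey : ∫ x, Real.log ((g x).toReal) ∂P ≤ Real.log m := by
        have hptwise : ∀ᵐ x ∂P, Real.log ((g x).toReal) ≤ (g x).toReal / m - 1 + Real.log m := by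
          filter_upwards [hgRpos] with x hx
          have h1 : Real.log ((g x).toReal / m) ≤ (g x).toReal / m - 1 :=
            Real.log_le_sub_one_of_pos (div_pos hx hmpos)
          rw [Real.log_div hx.ne' hmpos.ne'] at h1
          linarith
        have hrint : Integrable (fun x => (g x).toReal / m - 1 + Real.log m) P :=
          ((hgint.div_const m).sub (integrable_const 1)).add (integrable_const _)
        calc ∫ x, Real.log ((g x).toReal) ∂P
            ≤ ∫ x, ((g x).toReal / m - 1 + Real.log m) ∂P :=
              integral_mono_ae hloggint hrint hptwise
          _ = Real.log m := by
              have hfun : (fun x => (g x).toReal / m - 1 + Real.log m)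
                  = fun x => (g x).toReal * m⁻¹ + (Real.log m - 1) := by funext x; ring
              rw [hfun, integral_add (by simpa [div_eq_mul_inv] using hgint.div_const m)
                (integrable_const _), integral_mul_const, ← hm, integral_const]
              simp only [probReal_univ, measure_univ, ENNReal.toReal_one, one_smul]
              rw [mul_inv_cancel₀ hmpos.ne']
              ring
      have hlhs : ∫ x, Real.log ((g x).toReal) ∂P = (-(1/2 : ℝ)) * KL := by
        rw [integral_congr_ae hlog, integral_const_mul]
      rw [hlhs] at hkey
      have hexp2 : Real.exp (-(1/2 : ℝ) * KL) ≤ m := by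
        calc Real.exp (-(1/2 : ℝ) * KL) ≤ Real.exp (Real.log m) := Real.exp_le_exp.mpr hkey
          _ = m := Real.exp_log hmpos
      have := pow_le_pow_left₀ (Real.exp_nonneg _) hexp2 2
      rw [← Real.exp_nat_mul] at this
      norm_num at this
      rw [hmH] at this
      convert this using 2
      · rfl
      · ring
    -- assemble
    have hm1lt : m1 < ∞ := lt_of_le_of_lt hm1le (by norm_num)
    have h1 : H.toReal ^ 2 ≤ 2 * m1.toReal := by
      have := ENNReal.toReal_mono (by finiteness) hAB
      rw [ENNReal.toReal_pow] at this
      rwa [ENNReal.toReal_mul, ENNReal.toReal_ofNat] at this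
    have h2 : m1.toReal ≤ (P A).toReal + (Q Aᶜ).toReal := by
      have := ENNReal.toReal_mono (by finiteness) hC
      rwa [ENNReal.toReal_add (by finiteness) (by finiteness)] at this
    nlinarith [hD]
  · have : klDivE P Q = ⊤ := by rw [klDivE, if_neg hc]
    rw [this]
    have : expNeg ⊤ = 0 := by rw [expNeg, if_pos (Or.inl rfl)]
    rw [this, mul_zero]
    positivity
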